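/- Let k be a field, n ≥ 2, d ≥ 0, 1 ≤ s ≤ n+1 and let m_1,…,m_s be integers with m_1 ≥ 1 and 0 ≤ m_i ≤ d+1 for all i. Set b := Σ_{i=1}^s m_i − nd and assume either 1 ≤ b ≤ n, or (b ≤ 0 and m_1 = d+1). Then the dimension of the space of homogeneous polynomials of degree d in k[x_1,…,x_{n+1}] having multiplicity at least m_1 − 1 at the coordinate point e_1 of ℙ^n and at least m_i at the coordinate point e_i for 2 ≤ i ≤ s equals the dimension of the space of homogeneous polynomials of degree m_1 − 1 in k[y_1,…,y_n] having multiplicity at least k'_{1i} := max(m_1 + m_i − d − 1, 0) at the coordinate point e_{i−1} of ℙ^{n−1} for 2 ≤ i ≤ s. (This is the equality h^0(D') = h^0(D'_{(1)}|_{E_1}), where D' = D + E_1 and the restriction is to the exceptional divisor of the first point.) -/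

import Mathlib

open MvPolynomial Finset

noncomputable section

/-- The homogeneous vanishing ideal of the point of `ℙ^{N-1}` represented by the
vector `v`: the ideal generated by the linear forms vanishing at `v`. -/
def pointIdeal (k : Type) [Field k] (N : ℕ) (v : Fin N → k) :
    Ideal (MvPolynomial (Fin N) k) :=
  Ideal.span {P | P ∈ homogeneousSubmodule (Fin N) k 1 ∧ eval v P = 0}

/-- The homogeneous vanishing ideal `(x_j : j ≠ i)` of the `i`-th coordinate point. -/
def coordIdeal (k : Type) [Field k] (N : ℕ) (i : ℕ) :
    Ideal (MvPolynomial (Fin N) k) :=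
  Ideal.span {P | ∃ j : Fin N, (j : ℕ) ≠ i ∧ P = X j}

/-- The linear system `L_{n,d}(m_1,…,m_s; p_1,…,p_s)` of degree-`d` forms in `n+1`
variables with multiplicity at least `m i` at the point `p i`, for `i < s`. -/
def linSys (k : Type) [Field k] (n d s : ℕ) (m : ℕ → ℕ)
    (p : ℕ → (Fin (n + 1) → k)) : Submodule k (MvPolynomial (Fin (n + 1)) k) :=
  (homogeneousSubmodule (Fin (n + 1)) k d) ⊓
    ⨅ i ∈ Finset.range s,
      Submodule.restrictScalars k (pointIdeal k (n + 1) (p i) ^ (m i))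

/-- The generic dimension of `L_{n,d}(m_1,…,m_s)`: the minimum over all `s`-tuples of
points of `ℙ^n(k)` of the dimension of the corresponding linear system. -/
def gdim (k : Type) [Field k] (n d s : ℕ) (m : ℕ → ℕ) : ℕ :=
  sInf {N | ∃ p : ℕ → (Fin (n + 1) → k),
    (∀ i < s, p i ≠ 0) ∧ N = Module.finrank k ↥(linSys k n d s m p)}

/-- `k_I = max(Σ_{i∈I} m_i − (|I|−1)d, 0)`. -/
def kIdx (d : ℕ) (m : ℕ → ℕ) (I : Finset ℕ) : ℤ :=
  max ((∑ i ∈ I, (m i : ℤ)) - ((I.card : ℤ) - 1) * d) 0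

/-- `binom(a, n)`, understood to be `0` whenever `a < n` (in particular for negative `a`). -/
def binomZ (a : ℤ) (n : ℕ) : ℤ :=
  if a < (n : ℤ) then 0 else ((a.toNat).choose n : ℤ)

/-- The (affine) linear virtual dimension
`ℓ(n,d;m_1,…,m_s) = Σ_{I ⊆ {1,…,s}} (−1)^{|I|} binom(n + k_I − |I|, n)`. -/
def ldim (n d s : ℕ) (m : ℕ → ℕ) : ℤ :=
  ∑ I ∈ (Finset.range s).powerset,
    (-1) ^ I.card * binomZ ((n : ℤ) + kIdx d m I - (I.card : ℤ)) n

namespace Stmt8Aux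

variable {k : Type} [Field k]

/-- weighted degree ignoring the `i`-th coordinate -/
def wdeg {N : ℕ} (i : ℕ) (α : Fin N →₀ ℕ) : ℕ :=
  α.sum fun j a => if (j : ℕ) = i then 0 else a

lemma wdeg_add {N : ℕ} (i : ℕ) (α β : Fin N →₀ ℕ) :
    wdeg i (α + β) = wdeg i α + wdeg i β :=
  Finsupp.sum_add_index' (fun j => by simp) (fun j a b => by split <;> simp)

lemma wdeg_single {N : ℕ} (i : ℕ) (j : Fin N) (c : ℕ) :
    wdeg i (Finsupp.single j c) = if (j : ℕ) = i then 0 else c := by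
  unfold wdeg
  rw [Finsupp.sum_single_index (by simp)]

lemma wdeg_apply_add {N : ℕ} (j : Fin N) (α : Fin N →₀ ℕ) :
    wdeg (j : ℕ) α + α j = α.degree := by
  classical
  have h2 : wdeg (j : ℕ) α = ∑ l ∈ α.support, if l = j then 0 else α l := by
    unfold wdeg Finsupp.sum
    exact Finset.sum_congr rfl fun l _ => if_congr Fin.val_inj rfl rfl
  have h3 : (∑ l ∈ α.support, if l = j then α l else 0) = α j := by
    rw [Finset.sum_ite_eq' α.support j]
    split
    · rfl
    · exact (Finsupp.notMem_support_iff.mp (by assumption)).symm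
  rw [h2, ← h3, ← Finset.sum_add_distrib]
  unfold Finsupp.degree
  exact Finset.sum_congr rfl fun l _ => by split <;> simp

lemma degree_eq_sum_univ {N : ℕ} (α : Fin N →₀ ℕ) : α.degree = ∑ j : Fin N, α j := by
  unfold Finsupp.degree
  exact Finset.sum_subset (Finset.subset_univ _)
    (fun j _ hj => Finsupp.notMem_support_iff.mp hj)

lemma mem_coordIdeal_wdeg {N : ℕ} {i : ℕ} {P : MvPolynomial (Fin N) k}
    (hP : P ∈ coordIdeal k N i) : ∀ α ∈ P.support, 1 ≤ wdeg i α := by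
  classical
  induction hP using Submodule.span_induction with
  | mem x hx =>
      obtain ⟨j, hji, rfl⟩ := hx
      intro α hα
      rw [support_X, Finset.mem_singleton] at hα
      subst hα
      rw [wdeg_single, if_neg hji]
  | zero => simp
  | add x y _ _ hx hy =>
      intro α hα
      rcases Finset.mem_union.mp (MvPolynomial.support_add hα) with h | h
      exacts [hx α h, hy α h]
  | smul r x _ hx =>
      intro α hα
      rw [smul_eq_mul] at hα
      have h := MvPolynomial.support_mul r x hα
      rw [Finset.mem_add] at h
      obtain ⟨γ, hγ, δ, hδ, h⟩ := h
      rw [← h, wdeg_add]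
      have := hx δ hδ
      omega

lemma pow_le_wdeg {N : ℕ} {i e : ℕ} {P : MvPolynomial (Fin N) k}
    (hP : P ∈ coordIdeal k N i ^ e) : ∀ α ∈ P.support, e ≤ wdeg i α := by
  classical
  induction e generalizing P with
  | zero => simp
  | succ e ih =>
      rw [pow_succ] at hP
      refine Submodule.mul_induction_on hP (fun p hp q hq α hα => ?_)
        (fun x y hx hy α hα => ?_)
      · have h := MvPolynomial.support_mul p q hα
        rw [Finset.mem_add] at h
        obtain ⟨γ, hγ, δ, hδ, h⟩ := h
        rw [← h, wdeg_add]
        have h1 := ih hp γ hγ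
        have h2 := mem_coordIdeal_wdeg hq δ hδ
        omega
      · rcases Finset.mem_union.mp (MvPolynomial.support_add hα) with h | h
        exacts [hx α h, hy α h]

lemma monomial_mem_pow {N : ℕ} {i e : ℕ} {α : Fin N →₀ ℕ} (c : k) (h : e ≤ wdeg i α) :
    monomial α c ∈ coordIdeal k N i ^ e := by
  classical
  induction e generalizing α with
  | zero => simp
  | succ e ih =>
      have hex : ∃ j : Fin N, (j : ℕ) ≠ i ∧ α j ≠ 0 := by
        by_contra hc
        push_neg at hc
        have hz : wdeg i α = 0 := by
          unfold wdeg Finsupp.sum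
          refine Finset.sum_eq_zero fun j hj => ?_
          by_cases hji : (j : ℕ) = i
          · simp [hji]
          · simp [hji, hc j hji]
        omega
      obtain ⟨j, hji, hj⟩ := hex
      have hle : Finsupp.single j 1 ≤ α :=
        Finsupp.single_le_iff.mpr (Nat.one_le_iff_ne_zero.mpr hj)
      have hα : (α - Finsupp.single j 1) + Finsupp.single j 1 = α := tsub_add_cancel_of_le hle
      have hw : wdeg i (α - Finsupp.single j 1) + 1 = wdeg i α := by
        conv_rhs => rw [← hα]
        rw [wdeg_add, wdeg_single, if_neg hji]
      rw [pow_succ, ← hα, monomial_add_single]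
      refine Ideal.mul_mem_mul (ih (by omega)) ?_
      rw [pow_one]
      exact Ideal.subset_span ⟨j, hji, rfl⟩

lemma mem_pow_iff {N : ℕ} {i e : ℕ} {P : MvPolynomial (Fin N) k} :
    P ∈ coordIdeal k N i ^ e ↔ ∀ α ∈ P.support, e ≤ wdeg i α := by
  constructor
  · exact pow_le_wdeg
  · intro h
    rw [← support_sum_monomial_coeff P]
    exact Ideal.sum_mem _ fun α hα => monomial_mem_pow _ (h α hα)

/-- the index set of the monomial basis of the linear system -/
def mset (N d s : ℕ) (e : ℕ → ℕ) : Set (Fin N →₀ ℕ) :=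
  {α | α.degree = d ∧ ∀ i < s, e i ≤ wdeg i α}

lemma eq_span (N d s : ℕ) (e : ℕ → ℕ) :
    (homogeneousSubmodule (Fin N) k d ⊓
      ⨅ i ∈ Finset.range s, Submodule.restrictScalars k (coordIdeal k N i ^ e i))
    = Submodule.span k
        (Set.range fun α : mset N d s e => (monomial (α : Fin N →₀ ℕ) (1 : k))) := by
  apply le_antisymm
  · intro P hP
    rw [Submodule.mem_inf] at hP
    obtain ⟨hhom, hinf⟩ := hP
    rw [mem_homogeneousSubmodule] at hhom
    have hmem : ∀ i < s, P ∈ coordIdeal k N i ^ e i := fun i hi => by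
      have h1 := (Submodule.mem_iInf _).mp hinf i
      exact (Submodule.mem_iInf _).mp h1 (Finset.mem_range.mpr hi)
    rw [← support_sum_monomial_coeff P]
    refine Submodule.sum_mem _ fun α hα => ?_
    have h1 : α.degree = d := by
      rw [Finsupp.degree_eq_weight_one]
      exact hhom (mem_support_iff.mp hα)
    have h2 : ∀ i < s, e i ≤ wdeg i α := fun i hi => mem_pow_iff.mp (hmem i hi) α hα
    have h3 : monomial α (coeff α P) = (coeff α P) • monomial α (1 : k) := by
      rw [smul_monomial, smul_eq_mul, mul_one]
    rw [h3]
    exact Submodule.smul_mem _ _ (Submodule.subset_span ⟨⟨α, h1, h2⟩, rfl⟩)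
  · rw [Submodule.span_le]
    rintro _ ⟨⟨α, h1, h2⟩, rfl⟩
    rw [SetLike.mem_coe, Submodule.mem_inf]
    refine ⟨(mem_homogeneousSubmodule _ _).mpr (isHomogeneous_monomial _ h1), ?_⟩
    rw [Submodule.mem_iInf]
    intro i
    rw [Submodule.mem_iInf]
    intro hi
    exact monomial_mem_pow _ (h2 i (Finset.mem_range.mp hi))

lemma msetLI {N : ℕ} (A : Set (Fin N →₀ ℕ)) :
    LinearIndependent k fun α : A => (monomial (α : Fin N →₀ ℕ) (1 : k)) := by
  have h := (basisMonomials (Fin N) k).linearIndependent.comp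
      (fun α : A => (α : Fin N →₀ ℕ)) Subtype.val_injective
  simpa [coe_basisMonomials, Function.comp_def] using h

lemma finrank_eq_of_equiv {N M : ℕ} (A : Set (Fin N →₀ ℕ)) (B : Set (Fin M →₀ ℕ))
    (e : A ≃ B) :
    Module.finrank k (Submodule.span k
        (Set.range fun α : A => (monomial (α : Fin N →₀ ℕ) (1 : k))))
      = Module.finrank k (Submodule.span k
        (Set.range fun β : B => (monomial (β : Fin M →₀ ℕ) (1 : k)))) :=
  LinearEquiv.finrank_eq ((Module.Basis.span (msetLI A)).equiv (Module.Basis.span (msetLI B)) e)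

end Stmt8Aux

open Stmt8Aux

set_option maxHeartbeats 1000000 in
/-- the dimension of the space of degree-`d` forms in `n+1` variables
with multiplicity `m 0 − 1` at the first coordinate point and `m i` at the others
equals the dimension of the space of degree-`(m 0 − 1)` forms in `n` variables with
multiplicity `max(m 0 + m i − d − 1, 0)` at the coordinate points of `ℙ^{n−1}`. -/
theorem stmt8 (k : Type) [Field k] (n d s : ℕ) (hn : 2 ≤ n)
    (hs1 : 1 ≤ s) (hs2 : s ≤ n + 1)
    (m : ℕ → ℕ) (hm0 : 1 ≤ m 0) (hm : ∀ i < s, m i ≤ d + 1)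
    (hb : ((1 : ℤ) ≤ (∑ i ∈ Finset.range s, (m i : ℤ)) - (n : ℤ) * d ∧
            (∑ i ∈ Finset.range s, (m i : ℤ)) - (n : ℤ) * d ≤ (n : ℤ)) ∨
          ((∑ i ∈ Finset.range s, (m i : ℤ)) - (n : ℤ) * d ≤ 0 ∧ m 0 = d + 1)) :
    Module.finrank k ↥((homogeneousSubmodule (Fin (n + 1)) k d) ⊓
        ⨅ i ∈ Finset.range s,
          Submodule.restrictScalars k
            (coordIdeal k (n + 1) i ^ (if i = 0 then m 0 - 1 else m i)))
      = Module.finrank k ↥((homogeneousSubmodule (Fin n) k (m 0 - 1)) ⊓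
        ⨅ i ∈ Finset.range (s - 1),
          Submodule.restrictScalars k
            (coordIdeal k n i ^ (m 0 + m (i + 1) - (d + 1)))) := by
  classical
  have hm0d : m 0 ≤ d + 1 := hm 0 hs1
  set eL : ℕ → ℕ := fun i => if i = 0 then m 0 - 1 else m i with heL
  set eR : ℕ → ℕ := fun i => m 0 + m (i + 1) - (d + 1) with heR
  have hL := eq_span (k := k) (n + 1) d s eL
  have hR := eq_span (k := k) n (m 0 - 1) (s - 1) eR
  rw [hL, hR]
  -- notation
  set z : Fin (n + 1) := ⟨0, Nat.succ_pos n⟩ with hzdef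
  -- the integer hypothesis, ℕ-ified
  have hb1' : (1 : ℤ) ≤ (∑ i ∈ Finset.range s, (m i : ℤ)) - (n : ℤ) * d →
      n * d < ∑ i ∈ Finset.range s, m i := by
    intro h
    rw [← Nat.cast_sum] at h
    have h2 : ((n * d : ℕ) : ℤ) < ((∑ i ∈ Finset.range s, m i : ℕ) : ℤ) := by
      push_cast at h ⊢
      linarith
    exact_mod_cast h2
  -- the first coordinate is forced
  have forced : ∀ α : Fin (n + 1) →₀ ℕ, α ∈ mset (n + 1) d s eL →
      α z + m 0 = d + 1 := by
    rintro α ⟨hdeg, hcon⟩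
    have h0 : wdeg 0 α + α z = d := by
      have := wdeg_apply_add z α
      rw [hdeg] at this
      exact this
    have hc0 : m 0 - 1 ≤ wdeg 0 α := by
      have h := hcon 0 hs1
      rw [heL] at h
      simpa using h
    by_contra hne
    have hlt : α z + m 0 ≤ d := by omega
    rcases hb with ⟨hb1, _⟩ | ⟨_, hm00⟩
    · have hnd := hb1' hb1
      by_cases hsn : s = n + 1
      · subst hsn
        have key : ∀ j : Fin (n + 1), α j + m (j : ℕ) ≤ d := by
          intro j
          rcases Nat.eq_zero_or_pos (j : ℕ) with hj0 | hj0
          · have hj : j = z := Fin.ext hj0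
            rw [hj, hzdef]
            exact hlt
          · have hcj : (if (j : ℕ) = 0 then m 0 - 1 else m (j : ℕ)) ≤ wdeg (j : ℕ) α :=
              hcon (j : ℕ) j.isLt
            rw [if_neg (by omega)] at hcj
            have hwa := wdeg_apply_add j α
            rw [hdeg] at hwa
            omega
        have hsum : ∑ j : Fin (n + 1), (α j + m (j : ℕ)) ≤ (n + 1) * d := by
          calc ∑ j : Fin (n + 1), (α j + m (j : ℕ)) ≤ ∑ _j : Fin (n + 1), d :=
                Finset.sum_le_sum fun j _ => key j
            _ = (n + 1) * d := by simp [mul_comm]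
        rw [Finset.sum_add_distrib] at hsum
        have h4 : ∑ j : Fin (n + 1), α j = d := by rw [← degree_eq_sum_univ, hdeg]
        have h5 : ∑ j : Fin (n + 1), m (j : ℕ) = ∑ i ∈ Finset.range (n + 1), m i :=
          Fin.sum_univ_eq_sum_range m (n + 1)
        rw [h4, h5] at hsum
        have : (n + 1) * d = n * d + d := by ring
        linarith
      · have hsn' : s ≤ n := by omega
        have hex : ∃ i, i < s ∧ m i = d + 1 := by
          by_contra hc
          push_neg at hc
          have hall : ∀ i ∈ Finset.range s, m i ≤ d := fun i hi => by
            have h1 := hm i (Finset.mem_range.mp hi)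
            have h2 := hc i (Finset.mem_range.mp hi)
            omega
          have hsum : ∑ i ∈ Finset.range s, m i ≤ s * d := by
            calc ∑ i ∈ Finset.range s, m i ≤ ∑ _i ∈ Finset.range s, d :=
                  Finset.sum_le_sum hall
              _ = s * d := by simp [mul_comm]
          have hmul : s * d ≤ n * d := Nat.mul_le_mul_right d hsn'
          linarith
        obtain ⟨i, his, hmi⟩ := hex
        rcases Nat.eq_zero_or_pos i with rfl | hi0
        · omega
        · have hcj : (if i = 0 then m 0 - 1 else m i) ≤ wdeg i α := hcon i his
          rw [if_neg (by omega)] at hcj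
          have hwa : wdeg i α + α ⟨i, by omega⟩ = α.degree :=
            wdeg_apply_add (⟨i, by omega⟩ : Fin (n + 1)) α
          rw [hdeg] at hwa
          omega
    · omega
  -- the two transfer maps
  set F : (Fin (n + 1) →₀ ℕ) → (Fin n →₀ ℕ) := fun α =>
    Finsupp.comapDomain Fin.succ α ((Fin.succ_injective n).injOn) with hFdef
  set G : (Fin n →₀ ℕ) → (Fin (n + 1) →₀ ℕ) := fun β =>
    Finsupp.single z (d + 1 - m 0) +
      Finsupp.embDomain ⟨Fin.succ, Fin.succ_injective n⟩ β with hGdef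
  have hFapp : ∀ (α : Fin (n + 1) →₀ ℕ) (j : Fin n), F α j = α j.succ := fun α j => rfl
  have hzr : z ∉ Set.range (Fin.succ : Fin n → Fin (n + 1)) := by
    rintro ⟨b, hb2⟩
    have := congrArg Fin.val hb2
    simp [Fin.val_succ, hzdef] at this
  have hGapp0 : ∀ β : Fin n →₀ ℕ, G β z = d + 1 - m 0 := by
    intro β
    rw [hGdef]
    simp only [Finsupp.add_apply, Finsupp.single_eq_same]
    rw [Finsupp.embDomain_notin_range _ _ _ hzr, add_zero]
  have hGappS : ∀ (β : Fin n →₀ ℕ) (j : Fin n), G β j.succ = β j := by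
    intro β j
    rw [hGdef]
    simp only [Finsupp.add_apply]
    have h1 : Finsupp.single z (d + 1 - m 0) j.succ = 0 := by
      refine Finsupp.single_eq_of_ne' ?_
      intro h
      have := congrArg Fin.val h
      simp [Fin.val_succ, hzdef] at this
    have h2 : Finsupp.embDomain ⟨Fin.succ, Fin.succ_injective n⟩ β j.succ = β j :=
      Finsupp.embDomain_apply_self ⟨Fin.succ, Fin.succ_injective n⟩ β j
    rw [h1, h2, zero_add]
  have hFG : ∀ β : Fin n →₀ ℕ, F (G β) = β := by
    intro β
    ext j
    exact hGappS β j
  have hdegF : ∀ α : Fin (n + 1) →₀ ℕ, α.degree = α z + (F α).degree := by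
    intro α
    rw [degree_eq_sum_univ, degree_eq_sum_univ, Fin.sum_univ_succ]
    have hz0 : α 0 = α z := by congr 1
    rw [hz0]
    congr 1
  -- F maps the LHS monomial set to the RHS one
  have hFmem : ∀ α ∈ mset (n + 1) d s eL, F α ∈ mset n (m 0 - 1) (s - 1) eR := by
    intro α hα
    obtain ⟨hdeg, hcon⟩ := hα
    have hforced := forced α ⟨hdeg, hcon⟩
    have hdF : (F α).degree = m 0 - 1 := by
      have h := hdegF α
      rw [hdeg] at h
      omega
    refine ⟨hdF, ?_⟩
    intro i hi
    show m 0 + m (i + 1) - (d + 1) ≤ wdeg i (F α)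
    have hin : i < n := by omega
    have h1 : wdeg i (F α) + F α ⟨i, hin⟩ = (F α).degree :=
      wdeg_apply_add (⟨i, hin⟩ : Fin n) (F α)
    rw [hdF] at h1
    have h2 : F α ⟨i, hin⟩ = α ⟨i + 1, by omega⟩ := rfl
    have h3 : m (i + 1) ≤ wdeg (i + 1) α := by
      have h := hcon (i + 1) (by omega)
      rw [heL] at h
      simpa using h
    have h4 : wdeg (i + 1) α + α ⟨i + 1, by omega⟩ = α.degree :=
      wdeg_apply_add (⟨i + 1, by omega⟩ : Fin (n + 1)) α
    rw [hdeg] at h4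
    rw [h2] at h1
    omega
  -- G maps the RHS monomial set to the LHS one
  have hGmem : ∀ β ∈ mset n (m 0 - 1) (s - 1) eR, G β ∈ mset (n + 1) d s eL := by
    intro β hβ
    obtain ⟨hdeg, hcon⟩ := hβ
    have hdG : (G β).degree = d := by
      have h := hdegF (G β)
      rw [hFG β, hGapp0 β, hdeg] at h
      omega
    refine ⟨hdG, ?_⟩
    intro i hi
    show (if i = 0 then m 0 - 1 else m i) ≤ wdeg i (G β)
    have h1 : wdeg i (G β) + G β ⟨i, by omega⟩ = (G β).degree :=
      wdeg_apply_add (⟨i, by omega⟩ : Fin (n + 1)) (G β)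
    rw [hdG] at h1
    rcases Nat.eq_zero_or_pos i with rfl | hi0
    · rw [if_pos rfl]
      have h2 : G β ⟨0, by omega⟩ = d + 1 - m 0 := hGapp0 β
      rw [h2] at h1
      omega
    · rw [if_neg (by omega)]
      have hmi := hm i hi
      have hfs : (⟨i, by omega⟩ : Fin (n + 1)) = Fin.succ ⟨i - 1, by omega⟩ := by
        refine Fin.ext ?_
        simp only [Fin.val_succ]
        omega
      have h2 : G β ⟨i, by omega⟩ = β ⟨i - 1, by omega⟩ := by
        rw [hfs]
        exact hGappS β ⟨i - 1, by omega⟩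
      have h3 : m 0 + m ((i - 1) + 1) - (d + 1) ≤ wdeg (i - 1) β := hcon (i - 1) (by omega)
      rw [show (i - 1) + 1 = i by omega] at h3
      have h4 : wdeg (i - 1) β + β ⟨i - 1, by omega⟩ = β.degree :=
        wdeg_apply_add (⟨i - 1, by omega⟩ : Fin n) β
      rw [h2] at h1
      omega
  have hGF : ∀ α ∈ mset (n + 1) d s eL, G (F α) = α := by
    intro α hα
    have hforced := forced α hα
    ext j
    refine Fin.cases ?_ (fun j => ?_) j
    · have hz0 : (0 : Fin (n + 1)) = z := Fin.ext (by simp [hzdef])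
      rw [hz0, hGapp0 (F α)]
      omega
    · rw [hGappS (F α) j]
      rfl
  exact finrank_eq_of_equiv _ _
    { toFun := fun a => ⟨F a, hFmem a a.2⟩
      invFun := fun b => ⟨G b, hGmem b b.2⟩
      left_inv := fun a => Subtype.ext (hGF a a.2)
      right_inv := fun b => Subtype.ext (hFG b) }
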